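/- Let F be the free group on a₁, …, a_g with g ≥ 2. Then the subgroup of F generated by w = a₁²a₂²⋯a_g² and w' = a₁⁻¹wa₁ is free of rank 2; i.e., w and w' freely generate a free subgroup. -/

import Mathlib

namespace Stmt18Aux

open FreeGroup List

variable {α : Type*} [DecidableEq α]

/-- non-cancelling adjacent pair -/
abbrev NC (a b : α × Bool) : Prop := ¬(a.1 = b.1 ∧ a.2 = !b.2)

abbrev Ok (L : List (α × Bool)) : Prop := List.Chain' NC L

lemma ok_reduce (L : List (α × Bool)) : Ok (FreeGroup.reduce L) := by
  induction L with
  | nil => exact List.isChain_nil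
  | cons x L ih =>
    rw [FreeGroup.reduce.cons]
    rcases h : FreeGroup.reduce L with _ | ⟨hd, tl⟩
    · exact List.isChain_singleton _
    · rw [h] at ih
      dsimp only
      split_ifs with hb
      · exact ih.tail
      · exact List.isChain_cons_cons.2 ⟨hb, ih⟩

lemma reduce_eq_self {L : List (α × Bool)} (h : Ok L) : FreeGroup.reduce L = L := by
  induction L with
  | nil => rfl
  | cons x L ih =>
    rw [FreeGroup.reduce.cons, ih h.tail]
    cases L with
    | nil => rfl
    | cons y t =>
      dsimp only
      rw [if_neg (List.isChain_cons_cons.1 h).1]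

lemma toWord_ok (x : FreeGroup α) : Ok x.toWord := by
  rw [← FreeGroup.reduce_toWord]; exact ok_reduce _

lemma toWord_mul (x y : FreeGroup α) :
    (x * y).toWord = FreeGroup.reduce (x.toWord ++ y.toWord) := by
  rw [← FreeGroup.toWord_mk, ← FreeGroup.mul_mk, FreeGroup.mk_toWord, FreeGroup.mk_toWord]

lemma ok_of_all_true {L : List (α × Bool)} (h : ∀ p ∈ L, p.2 = true) : Ok L := by
  induction L with
  | nil => exact List.isChain_nil
  | cons x L ih =>
    show List.Chain' NC (x :: L)
    refine List.isChain_cons.2 ?_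
    refine ⟨?_, ih fun p hp => h p (List.mem_cons_of_mem _ hp)⟩
    intro y hy hbad
    have h1 := h x List.mem_cons_self
    have h2 := h y (List.mem_cons_of_mem _ (List.mem_of_mem_head? hy))
    rw [h1, h2] at hbad
    exact absurd hbad.2 (by simp)

lemma toWord_mk_all_true {L : List (α × Bool)} (h : ∀ p ∈ L, p.2 = true) :
    (FreeGroup.mk L).toWord = L := by
  rw [FreeGroup.toWord_mk, reduce_eq_self (ok_of_all_true h)]

/-- The key "at most one cancellation" ping-pong step. -/
lemma pp (c u : FreeGroup α) (q₁ q₂ p' p : α × Bool) (K : List (α × Bool))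
    (hc : c.toWord = q₁ :: q₂ :: (K ++ [p', p]))
    (hu : ∀ v, u.toWord = (p.1, !p.2) :: v → ∀ y ∈ v.head?, NC p' y) :
    ∃ r, (c * u).toWord = q₁ :: q₂ :: r := by
  have key : (c * u).toWord = FreeGroup.reduce (c.toWord ++ u.toWord) := toWord_mul c u
  have okc : Ok c.toWord := toWord_ok c
  have oku : Ok u.toWord := toWord_ok u
  rcases hU : u.toWord with _ | ⟨u₁, v⟩
  · refine ⟨K ++ [p', p], ?_⟩
    have : u = 1 := FreeGroup.toWord_eq_nil_iff.1 hU
    rw [this, mul_one, hc]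
  · by_cases hcan : u₁ = (p.1, !p.2)
    · -- one cancellation
      subst hcan
      have hAc : c.toWord = (q₁ :: q₂ :: (K ++ [p'])) ++ [p] := by
        rw [hc]; simp
      have okA : Ok (q₁ :: q₂ :: (K ++ [p'])) := by
        have := okc; rw [hAc] at this
        exact (List.isChain_append.1 this).1
      have okv : Ok v := by
        have := oku; rw [hU] at this
        exact this.tail
      have hjun : ∀ x ∈ (q₁ :: q₂ :: (K ++ [p'])).getLast?, ∀ y ∈ v.head?, NC x y := by
        intro x hx y hy
        have hx' : (q₁ :: q₂ :: (K ++ [p'])).getLast? = some p' := by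
          rw [show (q₁ :: q₂ :: (K ++ [p'])) = (q₁ :: q₂ :: K) ++ [p'] by simp,
            List.getLast?_concat]
        rw [hx'] at hx
        cases Option.some_inj.1 hx
        exact hu v hU y hy
      have okAv : Ok ((q₁ :: q₂ :: (K ++ [p'])) ++ v) :=
        List.isChain_append.2 ⟨okA, okv, hjun⟩
      have hstep : FreeGroup.Red.Step
          ((q₁ :: q₂ :: (K ++ [p'])) ++ (p.1, p.2) :: (p.1, !p.2) :: v)
          ((q₁ :: q₂ :: (K ++ [p'])) ++ v) := FreeGroup.Red.Step.not
      have heq : c.toWord ++ u.toWord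
          = (q₁ :: q₂ :: (K ++ [p'])) ++ (p.1, p.2) :: (p.1, !p.2) :: v := by
        rw [hAc, hU]; simp
      refine ⟨(K ++ [p']) ++ v, ?_⟩
      rw [key, heq, FreeGroup.reduce.Step.eq hstep, reduce_eq_self okAv]
      simp
    · -- no cancellation
      refine ⟨(K ++ [p', p]) ++ u.toWord, ?_⟩
      have hjun : ∀ x ∈ c.toWord.getLast?, ∀ y ∈ u.toWord.head?, NC x y := by
        intro x hx y hy
        have hx' : c.toWord.getLast? = some p := by
          rw [hc, show (q₁ :: q₂ :: (K ++ [p', p])) = (q₁ :: q₂ :: (K ++ [p'])) ++ [p] by simp,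
            List.getLast?_concat]
        rw [hx'] at hx
        cases Option.some_inj.1 hx
        rw [hU] at hy
        simp only [List.head?_cons, Option.mem_def, Option.some_inj] at hy
        cases hy
        rintro ⟨h1, h2⟩
        apply hcan
        obtain ⟨ua, ub⟩ := u₁
        obtain ⟨pa, pb⟩ := p
        simp_all
      have okcu : Ok (c.toWord ++ u.toWord) := List.isChain_append.2 ⟨okc, oku, hjun⟩
      rw [key, reduce_eq_self okcu, hc]
      simp

end Stmt18Aux

namespace Stmt18Aux2
open FreeGroup List

variable {α : Type*} [DecidableEq α]

lemma prod_sq (l : List α) :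
    (l.map fun i => FreeGroup.of i * FreeGroup.of i).prod
      = FreeGroup.mk (l.flatMap fun i => [(i, true), (i, true)]) := by
  induction l with
  | nil => simp [FreeGroup.one_eq_mk]
  | cons x l ih =>
    simp only [List.map_cons, List.prod_cons, List.flatMap_cons, ih]
    rw [show FreeGroup.of x = FreeGroup.mk [(x, true)] from rfl,
      FreeGroup.mul_mk, FreeGroup.mul_mk]
    rfl

lemma invRev_decomp (q₁ q₂ p' p : α × Bool) (K : List (α × Bool)) :
    FreeGroup.invRev (q₁ :: q₂ :: (K ++ [p', p]))
      = (p.1, !p.2) :: (p'.1, !p'.2) :: (FreeGroup.invRev K ++ [(q₂.1, !q₂.2), (q₁.1, !q₁.2)]) := by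
  simp [FreeGroup.invRev]

lemma finRange_decomp (k : ℕ) : ∃ m : List (Fin (k + 2)),
    List.finRange (k + 2) = 0 :: (m ++ [(⟨k + 1, by omega⟩ : Fin (k + 2))])
      ∧ ∀ x ∈ m ++ [(⟨k + 1, by omega⟩ : Fin (k + 2))], x ≠ 0 := by
  refine ⟨((List.finRange k).map Fin.succ).map Fin.castSucc, ?_, ?_⟩
  · rw [List.finRange_succ_last, List.finRange_succ]
    simp [Fin.last]
  · intro x hx
    rcases List.mem_append.1 hx with h | h
    · simp only [List.mem_map] at h
      obtain ⟨y, ⟨z, _, rfl⟩, rfl⟩ := h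
      simp [Fin.ext_iff]
    · simp only [List.mem_singleton] at h
      subst h
      simp [Fin.ext_iff]

end Stmt18Aux2


open Stmt18Aux Stmt18Aux2 Pointwise


/-- In the free group `F` on `a₁, …, a_g` (`g ≥ 2`), the elements
`w = a₁² ⋯ a_g²` and `w' = a₁⁻¹ w a₁` freely generate a free subgroup of rank 2, i.e. the
homomorphism from the free group of rank 2 with `0 ↦ w`, `1 ↦ w'` is injective. -/
theorem stmt18 (g : ℕ) (hg : 2 ≤ g)
    (w : FreeGroup (Fin g))
    (hw : w = ((List.finRange g).map (fun i => FreeGroup.of i * FreeGroup.of i)).prod)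
    (w' : FreeGroup (Fin g))
    (hw' : w' = (FreeGroup.of (⟨0, by omega⟩ : Fin g))⁻¹ * w * FreeGroup.of ⟨0, by omega⟩) :
    Function.Injective
      (FreeGroup.lift (fun i : Fin 2 => if i = 0 then w else w') :
        FreeGroup (Fin 2) →* FreeGroup (Fin g)) := by

  obtain ⟨k, rfl⟩ : ∃ k, g = k + 2 := ⟨g - 2, by omega⟩
  have hi0 : (⟨0, by omega⟩ : Fin (k + 2)) = 0 := by ext; simp
  rw [hi0] at hw'
  set iL : Fin (k + 2) := ⟨k + 1, by omega⟩ with hiLdef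
  obtain ⟨m, hfr, hm0⟩ := finRange_decomp k
  have hiL0 : iL ≠ 0 := hm0 iL (by simp [hiLdef])
  set f : Fin (k + 2) → List (Fin (k + 2) × Bool) := fun i => [(i, true), (i, true)] with hfdef
  set D : List (Fin (k + 2) × Bool) := (m ++ [iL]).flatMap f with hDdef
  set Km : List (Fin (k + 2) × Bool) := m.flatMap f with hKmdef
  have hDsplit : D = Km ++ [(iL, true), (iL, true)] := by
    simp [hDdef, hKmdef, List.flatMap_append, hfdef]
  -- D decomposition for w'
  obtain ⟨c₀, E, hDE, hc₀, hEtrue⟩ :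
      ∃ c₀ E, D = (c₀, true) :: (E ++ [(iL, true)]) ∧ c₀ ≠ 0 ∧ ∀ p ∈ E, p.2 = true := by
    cases m with
    | nil =>
      refine ⟨iL, [], by simp [hDdef, hfdef], hiL0, by simp⟩
    | cons z m' =>
      refine ⟨z, (z, true) :: (m'.flatMap f ++ [(iL, true)]), ?_, ?_, ?_⟩
      · simp [hDdef, hfdef, List.flatMap_append]
      · exact hm0 z (by simp)
      · intro p hp
        rcases List.mem_cons.1 hp with rfl | hp
        · rfl
        rcases List.mem_append.1 hp with hp | hp
        · simp only [List.mem_flatMap, hfdef] at hp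
          obtain ⟨i, _, hp⟩ := hp
          rcases List.mem_cons.1 hp with rfl | hp
          · rfl
          · simp at hp; rw [hp]
        · simp at hp; rw [hp]
  have hDtrue : ∀ p ∈ D, p.2 = true := by
    intro p hp
    simp only [hDdef, List.mem_flatMap, hfdef] at hp
    obtain ⟨i, _, hp⟩ := hp
    rcases List.mem_cons.1 hp with rfl | hp
    · rfl
    · simp at hp; rw [hp]
  -- w as mk
  have hwmk : w = FreeGroup.mk ((0, true) :: (0, true) :: D) := by
    rw [hw, prod_sq, hfr]
    simp [hDdef, hfdef]
    rfl
  have hWw : w.toWord = (0, true) :: (0, true) :: (Km ++ [(iL, true), (iL, true)]) := by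
    rw [hwmk, ← hDsplit, toWord_mk_all_true]
    intro p hp
    rcases List.mem_cons.1 hp with rfl | hp
    · rfl
    rcases List.mem_cons.1 hp with rfl | hp
    · rfl
    · exact hDtrue p hp
  -- w' as mk
  have hw'mk : w' = FreeGroup.mk ((0, true) :: (D ++ [(0, true)])) := by
    have h1 : w = FreeGroup.of 0 * FreeGroup.mk ((0, true) :: D) := by
      rw [hwmk, show FreeGroup.of (0 : Fin (k+2)) = FreeGroup.mk [(0, true)] from rfl,
        FreeGroup.mul_mk]
      rfl
    rw [hw', h1]
    rw [show FreeGroup.of (0 : Fin (k+2)) = FreeGroup.mk [(0, true)] from rfl]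
    group
    rw [FreeGroup.mul_mk]
    simp
  have hW'w : w'.toWord = (0, true) :: (c₀, true) :: (E ++ [(iL, true), (0, true)]) := by
    rw [hw'mk, toWord_mk_all_true]
    · rw [hDE]; simp
    · intro p hp
      rcases List.mem_cons.1 hp with rfl | hp
      · rfl
      rcases List.mem_append.1 hp with hp | hp
      · exact hDtrue p hp
      · simp at hp; rw [hp]
  -- inverse words
  have hWinv : w⁻¹.toWord
      = (iL, false) :: (iL, false) :: (FreeGroup.invRev Km ++ [(0, false), (0, false)]) := by
    rw [FreeGroup.toWord_inv, hWw, invRev_decomp]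
    simp
  have hW'inv : w'⁻¹.toWord
      = (0, false) :: (iL, false) :: (FreeGroup.invRev E ++ [(c₀, false), (0, false)]) := by
    rw [FreeGroup.toWord_inv, hW'w, invRev_decomp]
    simp
  -- the ping-pong sets
  set XS0 : Set (FreeGroup (Fin (k + 2))) :=
    {x | ∃ r, x.toWord = (0, true) :: (0, true) :: r} with hXS0
  set XS1 : Set (FreeGroup (Fin (k + 2))) :=
    {x | ∃ j r, j ≠ 0 ∧ x.toWord = (0, true) :: (j, true) :: r} with hXS1
  set YS0 : Set (FreeGroup (Fin (k + 2))) :=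
    {x | ∃ r, x.toWord = (iL, false) :: (iL, false) :: r} with hYS0
  set YS1 : Set (FreeGroup (Fin (k + 2))) :=
    {x | ∃ j r, x.toWord = ((0 : Fin (k + 2)), false) :: (j, false) :: r} with hYS1
  have main := FreeGroup.injective_lift_of_ping_pong
    (fun i : Fin 2 => if i = 0 then w else w') ![XS0, XS1] ![YS0, YS1]
    ?_ ?_ ?_ ?_ ?_ ?_
  · exact main
  · -- nonempty
    intro i
    fin_cases i
    · exact ⟨w, Km ++ [(iL, true), (iL, true)], hWw⟩
    · refine ⟨FreeGroup.mk [(0, true), (iL, true)], iL,  [], hiL0, ?_⟩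
      rw [toWord_mk_all_true]
      intro p hp
      rcases List.mem_cons.1 hp with rfl | hp
      · rfl
      · simp at hp; rw [hp]
  · -- X disjoint
    have d : Disjoint XS0 XS1 := by
      rw [Set.disjoint_left]
      rintro x ⟨r, hr⟩ ⟨j, r', hj, hr'⟩
      rw [hr] at hr'
      simp only [List.cons.injEq, Prod.mk.injEq] at hr'
      exact hj hr'.2.1.1.symm
    intro i j hij
    fin_cases i <;> fin_cases j
    · exact absurd rfl hij
    · simpa [Function.onFun] using d
    · simpa [Function.onFun] using d.symm
    · exact absurd rfl hij
  · -- Y disjoint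
    have d : Disjoint YS0 YS1 := by
      rw [Set.disjoint_left]
      rintro x ⟨r, hr⟩ ⟨j, r', hr'⟩
      rw [hr] at hr'
      simp only [List.cons.injEq, Prod.mk.injEq] at hr'
      exact hiL0 hr'.1.1
    intro i j hij
    fin_cases i <;> fin_cases j
    · exact absurd rfl hij
    · simpa [Function.onFun] using d
    · simpa [Function.onFun] using d.symm
    · exact absurd rfl hij
  · -- X vs Y disjoint
    have key : ∀ (S T : Set (FreeGroup (Fin (k + 2)))),
        (∀ x ∈ S, ∃ i r, x.toWord = (i, true) :: r) →
        (∀ x ∈ T, ∃ i r, x.toWord = (i, false) :: r) → Disjoint S T := by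
      intro S T hS hT
      rw [Set.disjoint_left]
      intro x hxS hxT
      obtain ⟨i, r, hr⟩ := hS x hxS
      obtain ⟨i', r', hr'⟩ := hT x hxT
      rw [hr] at hr'
      simp at hr'
    intro i j
    fin_cases i <;> fin_cases j <;>
      [skip; skip; skip; skip] <;>
      · refine key _ _ ?_ ?_
        · rintro x hx
          first
          | (obtain ⟨r, hr⟩ := hx; exact ⟨_, _, hr⟩)
          | (obtain ⟨j', r, _, hr⟩ := hx; exact ⟨_, _, hr⟩)
        · rintro x hx
          first
          | (obtain ⟨r, hr⟩ := hx; exact ⟨_, _, hr⟩)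
          | (obtain ⟨j', r, hr⟩ := hx; exact ⟨_, _, hr⟩)
  · -- hX : a i • (Y i)ᶜ ⊆ X i
    intro i
    fin_cases i
    · rintro x ⟨u, hu, rfl⟩
      have hu' : u ∉ YS0 := hu
      have hside : ∀ v, u.toWord = ((iL, false) : Fin (k + 2) × Bool) :: v →
          ∀ y ∈ v.head?, Stmt18Aux.NC (iL, true) y := by
        intro v hv y hy hbad
        rcases v with _ | ⟨y', v'⟩
        · simp at hy
        · simp only [List.head?_cons, Option.mem_def, Option.some.injEq] at hy
          subst hy
          obtain ⟨ya, yb⟩ := y'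
          obtain ⟨h1, h2⟩ := hbad
          have hya : ya = iL := h1.symm
          have hyb : yb = false := by simpa using h2.symm
          exact hu' ⟨v', by rw [hv, hya, hyb]⟩
      obtain ⟨r, hr⟩ := pp w u (0, true) (0, true) (iL, true) (iL, true) Km hWw
        (fun v hv => hside v hv)
      exact ⟨r, hr⟩
    · rintro x ⟨u, hu, rfl⟩
      have hu' : u ∉ YS1 := hu
      have hside : ∀ v, u.toWord = (((0 : Fin (k + 2)), false) : Fin (k + 2) × Bool) :: v →
          ∀ y ∈ v.head?, Stmt18Aux.NC (iL, true) y := by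
        intro v hv y hy hbad
        rcases v with _ | ⟨y', v'⟩
        · simp at hy
        · simp only [List.head?_cons, Option.mem_def, Option.some.injEq] at hy
          subst hy
          obtain ⟨ya, yb⟩ := y'
          obtain ⟨h1, h2⟩ := hbad
          have hya : ya = iL := h1.symm
          have hyb : yb = false := by simpa using h2.symm
          exact hu' ⟨iL, v', by rw [hv, hya, hyb]⟩
      obtain ⟨r, hr⟩ := pp w' u (0, true) (c₀, true) (iL, true) (0, true) E hW'w
        (fun v hv => hside v hv)
      exact ⟨c₀, r, hc₀, hr⟩
  · -- hY : (a i)⁻¹ • (X i)ᶜ ⊆ Y i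
    intro i
    fin_cases i
    · rintro x ⟨u, hu, rfl⟩
      have hu' : u ∉ XS0 := hu
      have hside : ∀ v, u.toWord = (((0 : Fin (k + 2)), true) : Fin (k + 2) × Bool) :: v →
          ∀ y ∈ v.head?, Stmt18Aux.NC ((0 : Fin (k + 2)), false) y := by
        intro v hv y hy hbad
        rcases v with _ | ⟨y', v'⟩
        · simp at hy
        · simp only [List.head?_cons, Option.mem_def, Option.some.injEq] at hy
          subst hy
          obtain ⟨ya, yb⟩ := y'
          obtain ⟨h1, h2⟩ := hbad
          have hya : ya = (0 : Fin (k + 2)) := h1.symm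
          have hyb : yb = true := by simpa using h2.symm
          exact hu' ⟨v', by rw [hv, hya, hyb]⟩
      obtain ⟨r, hr⟩ := pp w⁻¹ u (iL, false) (iL, false) ((0 : Fin (k + 2)), false)
        ((0 : Fin (k + 2)), false) (FreeGroup.invRev Km) hWinv (fun v hv => hside v hv)
      exact ⟨r, hr⟩
    · rintro x ⟨u, hu, rfl⟩
      have hu' : u ∉ XS1 := hu
      have hside : ∀ v, u.toWord = (((0 : Fin (k + 2)), true) : Fin (k + 2) × Bool) :: v →
          ∀ y ∈ v.head?, Stmt18Aux.NC (c₀, false) y := by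
        intro v hv y hy hbad
        rcases v with _ | ⟨y', v'⟩
        · simp at hy
        · simp only [List.head?_cons, Option.mem_def, Option.some.injEq] at hy
          subst hy
          obtain ⟨ya, yb⟩ := y'
          obtain ⟨h1, h2⟩ := hbad
          have hya : ya = c₀ := h1.symm
          have hyb : yb = true := by simpa using h2.symm
          exact hu' ⟨c₀, v', hc₀, by rw [hv, hya, hyb]⟩
      obtain ⟨r, hr⟩ := pp w'⁻¹ u ((0 : Fin (k + 2)), false) (iL, false) (c₀, false)
        ((0 : Fin (k + 2)), false) (FreeGroup.invRev E) hW'inv (fun v hv => hside v hv)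
      exact ⟨iL, r, hr⟩
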